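/- For any graph G with at least one vertex, any two independent sets of equal size in G can be MTJ reconfigured into each other using jumps of size at most max(vc(G), 1), where vc(G) is the minimum size of a vertex cover of G. -/
import Mathlib


/-- `S` is an independent set in `G`. -/
def IsIndepSet {V : Type*} (G : SimpleGraph V) (S : Finset V) : Prop :=
  ∀ u ∈ S, ∀ v ∈ S, ¬ G.Adj u v

/-- `C` is a vertex cover of `G`. -/
def IsVertexCover {V : Type*} (G : SimpleGraph V) (C : Finset V) : Prop :=
  ∀ u v, G.Adj u v → u ∈ C ∨ v ∈ C

/-- The minimum size of a vertex cover of `G`. -/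
noncomputable def vcNum (V : Type*) [Fintype V] (G : SimpleGraph V) : ℕ :=
  sInf {n | ∃ C : Finset V, IsVertexCover G C ∧ C.card = n}

/-- `A` can be `k`-MTJ reconfigured to `B` in `G`. -/
def MTJReconf {V : Type*} [DecidableEq V] (G : SimpleGraph V) (k : ℕ)
    (A B : Finset V) : Prop :=
  ∃ (n : ℕ) (W : ℕ → Finset V), W 0 = A ∧ W n = B ∧
    (∀ i ≤ n, IsIndepSet G (W i) ∧ (W i).card = A.card) ∧
    (∀ i < n, (W (i + 1) \ W i).card ≤ k)


lemma indep_subset {V : Type*} {G : SimpleGraph V} {S R : Finset V}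
    (h : S ⊆ R) (hR : IsIndepSet G R) : IsIndepSet G S :=
  fun u hu v hv => hR u (h hu) v (h hv)

lemma mtj_refl {V : Type*} [DecidableEq V] (G : SimpleGraph V) (k : ℕ) (A : Finset V)
    (hA : IsIndepSet G A) : MTJReconf G k A A :=
  ⟨0, fun _ => A, rfl, rfl, fun _ _ => ⟨hA, rfl⟩, fun i hi => absurd hi (Nat.not_lt_zero i)⟩

lemma mtj_trans {V : Type*} [DecidableEq V] {G : SimpleGraph V} {k : ℕ} {A B C : Finset V}
    (h1 : MTJReconf G k A B) (h2 : MTJReconf G k B C) : MTJReconf G k A C := by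
  obtain ⟨n, W, hW0, hWn, hWind, hWjmp⟩ := h1
  obtain ⟨m, W', hW'0, hW'm, hW'ind, hW'jmp⟩ := h2
  have hBA : B.card = A.card := by
    have := (hWind n le_rfl).2; rwa [hWn] at this
  refine ⟨n + m, fun i => if i ≤ n then W i else W' (i - n), by simp [hW0], ?_, ?_, ?_⟩
  · by_cases h : m = 0
    · subst h
      have : B = C := hW'0.symm.trans hW'm
      simpa [this] using hWn
    · have : ¬ n + m ≤ n := by omega
      simp [this, hW'm]
  · intro i hi
    by_cases h : i ≤ n
    · simp only [if_pos h]; exact hWind i h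
    · have hi' : i - n ≤ m := by omega
      have := hW'ind (i - n) hi'
      simp only [h, if_false]
      exact ⟨this.1, this.2.trans hBA⟩
  · intro i hi
    by_cases h : i + 1 ≤ n
    · simp only [Nat.le_of_succ_le h, if_true, h, if_true]
      exact hWjmp i (by omega)
    · by_cases h' : i ≤ n
      · have hin : i = n := by omega
        subst hin
        have h1 : ¬ (i + 1 ≤ i) := by omega
        simp only [h1, if_false, le_refl, if_true, Nat.add_sub_cancel_left, hWn, ← hW'0]
        have := hW'jmp 0 (by omega)
        simpa using this
      · simp only [h, h', if_false]
        have : i + 1 - n = (i - n) + 1 := by omega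
        rw [this]
        exact hW'jmp (i - n) (by omega)

lemma mtj_step {V : Type*} [DecidableEq V] (G : SimpleGraph V) (k : ℕ) (A B : Finset V)
    (hA : IsIndepSet G A) (hB : IsIndepSet G B) (hcard : B.card = A.card)
    (hk : (B \ A).card ≤ k) : MTJReconf G k A B := by
  refine ⟨1, fun i => if i = 0 then A else B, by simp, by simp, ?_, ?_⟩
  · intro i hi
    interval_cases i <;> simp [hA, hB, hcard]
  · intro i hi
    interval_cases i
    simpa using hk

lemma mtj_within {V : Type*} [DecidableEq V] (G : SimpleGraph V) (k : ℕ)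
    (hk : 1 ≤ k) (R : Finset V) (hR : IsIndepSet G R) :
    ∀ n (S S' : Finset V), (S' \ S).card = n → S ⊆ R → S' ⊆ R → S.card = S'.card →
      MTJReconf G k S S' := by
  intro n
  induction n with
  | zero =>
    intro S S' h hS hS' hc
    have hsub : S' ⊆ S := by
      rwa [Finset.card_eq_zero, Finset.sdiff_eq_empty_iff_subset] at h
    have : S = S' := (Finset.eq_of_subset_of_card_le hsub hc.le).symm
    subst this
    exact mtj_refl G k S (indep_subset hS hR)
  | succ n ih =>
    intro S S' h hS hS' hc
    have hx : ∃ x, x ∈ S' \ S := Finset.card_pos.mp (by omega) |>.exists_mem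
    obtain ⟨x, hx⟩ := hx
    have hsy : (S \ S').card = n + 1 := by rw [Finset.card_sdiff_comm hc, h]
    obtain ⟨y, hy⟩ := Finset.card_pos.mp (by omega : 0 < (S \ S').card) |>.exists_mem
    rw [Finset.mem_sdiff] at hx hy
    set T : Finset V := insert x (S.erase y) with hT
    have hxS : x ∉ S := hx.2
    have hTR : T ⊆ R := by
      intro z hz
      rw [hT, Finset.mem_insert] at hz
      rcases hz with rfl | hz
      · exact hS' hx.1
      · exact hS (Finset.erase_subset _ _ hz)
    have hTcard : T.card = S.card := by
      rw [hT, Finset.card_insert_of_notMem (fun hmem => hxS (Finset.erase_subset _ _ hmem)),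
        Finset.card_erase_of_mem hy.1]
      have : 0 < S.card := Finset.card_pos.mpr ⟨y, hy.1⟩
      omega
    have hTS : (T \ S).card ≤ 1 := by
      have : T \ S ⊆ {x} := by
        intro z hz
        rw [Finset.mem_sdiff, hT, Finset.mem_insert] at hz
        rcases hz.1 with rfl | hz'
        · exact Finset.mem_singleton_self _
        · exact absurd (Finset.erase_subset _ _ hz') hz.2
      calc (T \ S).card ≤ ({x} : Finset V).card := Finset.card_le_card this
        _ = 1 := Finset.card_singleton x
    have hstep : MTJReconf G k S T :=
      mtj_step G k S T (indep_subset hS hR) (indep_subset hTR hR) hTcard (hTS.trans hk)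
    have hST : S' \ T = (S' \ S).erase x := by
      ext z
      simp only [Finset.mem_sdiff, hT, Finset.mem_insert, Finset.mem_erase, not_or]
      constructor
      · rintro ⟨hz1, hz2, hz3⟩
        refine ⟨hz2, hz1, ?_⟩
        intro hzS
        exact hz3 ⟨fun h => hy.2 (h ▸ hz1), hzS⟩
      · rintro ⟨hz1, hz2, hz3⟩
        exact ⟨hz2, hz1, fun h => hz3 h.2⟩
    have hrest : MTJReconf G k T S' := by
      apply ih T S' _ hTR hS' (by rw [hTcard, hc])
      rw [hST, Finset.card_erase_of_mem (Finset.mem_sdiff.mpr hx), h]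
      omega
    exact mtj_trans hstep hrest

/-- in any graph with at least one vertex, any two independent sets of equal
size can be MTJ reconfigured into each other with jumps of size at most `max (vc G) 1`. -/
theorem mtj_le_vertexCover {V : Type*} [Fintype V] [DecidableEq V] [Nonempty V]
    (G : SimpleGraph V) (I J : Finset V) (hI : IsIndepSet G I) (hJ : IsIndepSet G J)
    (hcard : I.card = J.card) :
    MTJReconf G (max (vcNum V G) 1) I J := by
  set k := max (vcNum V G) 1 with hk
  have hk1 : 1 ≤ k := le_max_right _ _
  -- minimum vertex cover
  have hne : {n | ∃ C : Finset V, IsVertexCover G C ∧ C.card = n}.Nonempty :=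
    ⟨(Finset.univ : Finset V).card, Finset.univ, fun u v _ => Or.inl (Finset.mem_univ u), rfl⟩
  obtain ⟨C, hC, hCcard⟩ := Nat.sInf_mem hne
  have hvck : C.card ≤ k := by rw [hCcard]; exact le_max_left _ _
  set R : Finset V := Finset.univ \ C with hRdef
  have hR : IsIndepSet G R := by
    intro u hu v hv hadj
    rcases hC u v hadj with h | h
    · exact (Finset.mem_sdiff.mp hu).2 h
    · exact (Finset.mem_sdiff.mp hv).2 h
  -- every independent set S: vcNum ≤ |V| - |S|, i.e. |S| ≤ |R|
  have hbound : ∀ S : Finset V, IsIndepSet G S → S.card ≤ R.card := by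
    intro S hSind
    have hcov : IsVertexCover G (Finset.univ \ S) := by
      intro u v hadj
      by_contra hcon
      push_neg at hcon
      have hu : u ∈ S := by
        by_contra h; exact hcon.1 (Finset.mem_sdiff.mpr ⟨Finset.mem_univ u, h⟩)
      have hv : v ∈ S := by
        by_contra h; exact hcon.2 (Finset.mem_sdiff.mpr ⟨Finset.mem_univ v, h⟩)
      exact hSind u hu v hv hadj
    have h1 : C.card ≤ (Finset.univ \ S).card := by
      rw [hCcard]
      exact Nat.sInf_le ⟨Finset.univ \ S, hcov, rfl⟩
    have h2 : (Finset.univ \ S).card = Fintype.card V - S.card := by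
      rw [Finset.card_sdiff_of_subset (Finset.subset_univ S), Finset.card_univ]
    have h3 : R.card = Fintype.card V - C.card := by
      rw [hRdef, Finset.card_sdiff_of_subset (Finset.subset_univ C), Finset.card_univ]
    have h4 : S.card ≤ Fintype.card V := Finset.card_le_univ S
    omega
  -- project an independent set into R in one jump
  have hproj : ∀ S : Finset V, IsIndepSet G S →
      ∃ S' : Finset V, S' ⊆ R ∧ S'.card = S.card ∧ (S' \ S).card ≤ k ∧ (S \ S').card ≤ k := by
    intro S hSind
    have hdisj : Disjoint (S \ C) (R \ S) := by
      apply Finset.disjoint_left.mpr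
      intro a ha hb
      exact (Finset.mem_sdiff.mp hb).2 (Finset.mem_sdiff.mp ha).1
    have hsize : (S ∩ C).card ≤ (R \ S).card := by
      have h1 : (S \ C).card + (S ∩ C).card = S.card := Finset.card_sdiff_add_card_inter S C
      have h2 : S \ C ⊆ R := by
        intro a ha
        rw [Finset.mem_sdiff] at ha ⊢
        exact ⟨Finset.mem_univ a, ha.2⟩
      have hRS : R ∩ S = S \ C := by
        ext a
        simp only [Finset.mem_inter, Finset.mem_sdiff, hRdef, Finset.mem_univ, true_and]
        tauto
      have h3 : (R \ S).card + (S \ C).card = R.card := by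
        have h := Finset.card_sdiff_add_card_inter R S
        rwa [hRS] at h
      have h4 := hbound S hSind
      have h5 : (S \ C).card ≤ R.card := Finset.card_le_card h2
      omega
    obtain ⟨T, hTsub, hTcard⟩ := Finset.exists_subset_card_eq hsize
    refine ⟨(S \ C) ∪ T, ?_, ?_, ?_, ?_⟩
    · intro a ha
      rcases Finset.mem_union.mp ha with h | h
      · rw [Finset.mem_sdiff] at h ⊢; exact ⟨Finset.mem_univ a, h.2⟩
      · exact (Finset.mem_sdiff.mp (hTsub h)).1
    · rw [Finset.card_union_of_disjoint (Finset.disjoint_of_subset_right hTsub hdisj),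
        hTcard, Finset.card_sdiff_add_card_inter]
    · have : ((S \ C) ∪ T) \ S ⊆ T := by
        intro a ha
        rw [Finset.mem_sdiff, Finset.mem_union] at ha
        rcases ha.1 with h | h
        · exact absurd (Finset.mem_sdiff.mp h).1 ha.2
        · exact h
      calc (((S \ C) ∪ T) \ S).card ≤ T.card := Finset.card_le_card this
        _ = (S ∩ C).card := hTcard
        _ ≤ C.card := Finset.card_le_card (Finset.inter_subset_right)
        _ ≤ k := hvck
    · have : S \ ((S \ C) ∪ T) ⊆ S ∩ C := by
        intro a ha
        rw [Finset.mem_sdiff, Finset.mem_union, not_or, Finset.mem_sdiff, not_and, not_not] at ha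
        exact Finset.mem_inter.mpr ⟨ha.1, ha.2.1 ha.1⟩
      calc (S \ ((S \ C) ∪ T)).card ≤ (S ∩ C).card := Finset.card_le_card this
        _ ≤ C.card := Finset.card_le_card (Finset.inter_subset_right)
        _ ≤ k := hvck
  obtain ⟨I', hI'R, hI'card, hI'jmp, _⟩ := hproj I hI
  obtain ⟨J', hJ'R, hJ'card, _, hJ'jmp⟩ := hproj J hJ
  have step1 : MTJReconf G k I I' :=
    mtj_step G k I I' hI (indep_subset hI'R hR) hI'card hI'jmp
  have step2 : MTJReconf G k I' J' :=
    mtj_within G k hk1 R hR _ I' J' rfl hI'R hJ'R (by rw [hI'card, hJ'card, hcard])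
  have step3 : MTJReconf G k J' J :=
    mtj_step G k J' J (indep_subset hJ'R hR) hJ (by rw [hJ'card]) hJ'jmp
  exact mtj_trans (mtj_trans step1 step2) step3
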